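/- Every morphism in the path category is componentwise an isomorphism: if (P,p) and (Q,q) are F-paths of lengths n ≤ m and (φ_k : P_k → Q_k)_{k ≤ n} is a path morphism (φ₀ = id_I and q_k ∘ φ_k = F(φ_{k+1}) ∘ p_k for all k < n), then φ_k is an isomorphism for every 0 ≤ k ≤ n. -/
import Mathlib


open CategoryTheory CategoryTheory.Limits

universe v u

variable {C : Type u} [Category.{v} C]

def Precise (F : C ⥤ C) {S R : C} (s : S ⟶ F.obj R) : Prop :=
  ∀ {A D : C} (f : S ⟶ F.obj A) (g : R ⟶ D) (h : A ⟶ D),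
    f ≫ F.map h = s ≫ F.map g → ∃ d : R ⟶ A, s ≫ F.map d = f ∧ d ≫ h = g

structure FPath (F : C ⥤ C) (I : C) (n : ℕ) where
  P : ℕ → C
  hP0 : P 0 = I
  p : ∀ k, k < n → (P k ⟶ F.obj (P (k + 1)))
  precise : ∀ k (h : k < n), Precise F (p k h)

def pow (F : C ⥤ C) : ℕ → C ⥤ C :=
  fun n => Nat.rec (𝟭 C) (fun _ G => F ⋙ G) n

def comps {F : C ⥤ C} {I : C} {n : ℕ} (Pp : FPath F I n) :
    ∀ k, k ≤ n → (I ⟶ (pow F k).obj (Pp.P k))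
  | 0, _ => eqToHom Pp.hP0.symm
  | (k + 1), h =>
      comps Pp k (Nat.le_of_succ_le h) ≫ (pow F k).map (Pp.p k (Nat.lt_of_succ_le h))

noncomputable def Comp [HasTerminal C] {F : C ⥤ C} {I : C} {n : ℕ} (Pp : FPath F I n) :
    I ⟶ (pow F n).obj (⊤_ C) :=
  comps Pp n le_rfl ≫ (pow F n).map (terminal.from (Pp.P n))

lemma pow_add_obj (F : C ⥤ C) (n : ℕ) : ∀ (k : ℕ) (X : C),
    (pow F (n + k)).obj X = (pow F n).obj ((pow F k).obj X)
  | 0, _ => rfl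
  | (k + 1), X => pow_add_obj F n k (F.obj X)

lemma pow_sub_obj (F : C ⥤ C) {n m : ℕ} (h : n ≤ m) (X : C) :
    (pow F m).obj X = (pow F n).obj ((pow F (m - n)).obj X) := by
  conv_lhs => rw [← Nat.add_sub_cancel' h]
  exact pow_add_obj F n (m - n) X

theorem pathMor_componentwise_iso (F : C ⥤ C) (I : C) {n m : ℕ} (hnm : n ≤ m)
    (Pp : FPath F I n) (Qq : FPath F I m)
    (φ : ∀ k, k ≤ n → (Pp.P k ⟶ Qq.P k))
    (hφ0 : φ 0 (Nat.zero_le n) = eqToHom (Pp.hP0.trans Qq.hP0.symm))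
    (hcomm : ∀ k (hk : k < n),
      φ k hk.le ≫ Qq.p k (lt_of_lt_of_le hk hnm) =
        Pp.p k hk ≫ F.map (φ (k + 1) hk)) :
    ∀ k (hk : k ≤ n), IsIso (φ k hk) := by
  intro k
  induction k with
  | zero =>
    intro hk
    have : φ 0 hk = eqToHom (Pp.hP0.trans Qq.hP0.symm) := hφ0
    rw [this]; infer_instance
  | succ k ih =>
    intro hk
    have hkn : k < n := hk
    have hik : IsIso (φ k hkn.le) := ih hkn.le
    obtain ⟨d, hd1, hd2⟩ := Qq.precise k (lt_of_lt_of_le hkn hnm)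
      (inv (φ k hkn.le) ≫ Pp.p k hkn) (𝟙 _) (φ (k + 1) hk)
      (by rw [F.map_id, Category.comp_id, Category.assoc, ← hcomm k hkn,
            ← Category.assoc, IsIso.inv_hom_id, Category.id_comp])
    obtain ⟨e, he1, he2⟩ := Pp.precise k hkn (Pp.p k hkn) (𝟙 _)
      (φ (k + 1) hk ≫ d)
      (by rw [F.map_id, Category.comp_id, F.map_comp, ← Category.assoc,
            ← hcomm k hkn, Category.assoc, hd1, ← Category.assoc,
            IsIso.hom_inv_id, Category.id_comp])
    have hφd : φ (k + 1) hk ≫ d = 𝟙 _ := by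
      have idem : (φ (k + 1) hk ≫ d) ≫ (φ (k + 1) hk ≫ d) = φ (k + 1) hk ≫ d := by
        rw [Category.assoc, ← Category.assoc d, hd2, Category.id_comp]
      calc φ (k + 1) hk ≫ d = (e ≫ (φ (k + 1) hk ≫ d)) ≫ (φ (k + 1) hk ≫ d) := by
            rw [he2, Category.id_comp]
        _ = e ≫ ((φ (k + 1) hk ≫ d) ≫ (φ (k + 1) hk ≫ d)) := by rw [Category.assoc]
        _ = e ≫ (φ (k + 1) hk ≫ d) := by rw [idem]
        _ = 𝟙 _ := he2
    exact ⟨d, hφd, hd2⟩
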